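/- Let p be a prime, k a positive integer divisible by p - 1, and μ_1 ≠ μ_2 elements of {0, ..., p-1}. Let c_1, ..., c_p be integers coprime to p, and consider vectors v_i = c_i(e_ν + μ_1 e^ν) for 1 ≤ i ≤ p-1 and v_p = c_p(e_ν + μ_2 e^ν) in (ℤ/p²ℤ)², where e_0 = (1,0), e_ν = (ν,1) for 1 ≤ ν ≤ p, e^0 = (0,p), and e^ν = (p,0) for ν ≥ 1. Then there exist integers y_1, ..., y_p with p ∤ y_p such that ∑_{i=1}^p v_i y_i^k ≡ 0 (mod p) and moreover ∑_{i=1}^p v_i y_i^k, divided by p, is a nonzero vector modulo p (i.e., the contraction yields a variable at exactly one level higher). -/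

import Mathlib

/-- The vector `e_ν` of the paper: `e_0 = (1,0)` and `e_ν = (ν,1)` for `ν ≥ 1`. -/
def eLow (ν : ℕ) : ℤ × ℤ := if ν = 0 then (1, 0) else ((ν : ℤ), 1)

/-- The vector `e^ν` of the paper: `e^0 = (0,p)` and `e^ν = (p,0)` for `ν ≥ 1`. -/
def eHigh (p ν : ℕ) : ℤ × ℤ := if ν = 0 then (0, (p : ℤ)) else ((p : ℤ), 0)

lemma closed_eq_univ {p : ℕ} [Fact p.Prime] (S : Finset (ZMod p)) (hS : S.Nonempty)
    {c : ZMod p} (hc : c ≠ 0) (hcl : ∀ x ∈ S, x + c ∈ S) : S = Finset.univ := by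
  obtain ⟨x, hx⟩ := hS
  have key : ∀ n : ℕ, x + n • c ∈ S := by
    intro n; induction n with
    | zero => simpa using hx
    | succ n ih =>
      have := hcl _ ih
      rw [succ_nsmul, ← add_assoc]
      exact this
  apply Finset.eq_univ_of_forall
  intro z
  have h1 : (((z - x) * c⁻¹).val) • c = z - x := by
    rw [nsmul_eq_mul, ZMod.natCast_val, ZMod.cast_id, mul_assoc, inv_mul_cancel₀ hc, mul_one]
  have h2 : z = x + (((z - x) * c⁻¹).val) • c := by
    rw [h1]; ring
  rw [h2]; exact key _

lemma card_subsetSums {p : ℕ} [Fact p.Prime] {ι : Type*} [DecidableEq ι]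
    (c : ι → ZMod p) (s : Finset ι) (hc : ∀ i ∈ s, c i ≠ 0) :
    min p (s.card + 1) ≤ ((s.powerset).image (fun T => ∑ i ∈ T, c i)).card := by
  classical
  revert hc
  induction s using Finset.induction_on with
  | empty =>
    intro _
    simp only [Finset.powerset_empty, Finset.image_singleton, Finset.sum_empty,
      Finset.card_singleton, Finset.card_empty]
    exact le_trans (min_le_right _ _) le_rfl
  | @insert a s ha ih =>
    intro hc
    have hca : c a ≠ 0 := hc a (Finset.mem_insert_self a s)
    have hcs : ∀ i ∈ s, c i ≠ 0 := fun i hi => hc i (Finset.mem_insert_of_mem hi)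
    have IH := ih hcs
    set SS : Finset (ZMod p) := s.powerset.image (fun T => ∑ i ∈ T, c i) with hSS
    have himg : (insert a s).powerset.image (fun T => ∑ i ∈ T, c i)
        = SS ∪ SS.image (fun x => c a + x) := by
      rw [Finset.powerset_insert, Finset.image_union]
      congr 1
      rw [Finset.image_image, hSS, Finset.image_image]
      apply Finset.image_congr
      intro T hT
      simp only [Function.comp_apply]
      rw [Finset.sum_insert (fun h => ha (Finset.mem_powerset.mp hT h))]
    rw [himg]
    by_cases hsub : SS.image (fun x => c a + x) ⊆ SS
    · have hne : SS.Nonempty := ⟨0, by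
        rw [hSS]
        exact Finset.mem_image.mpr ⟨∅, Finset.empty_mem_powerset s, by simp⟩⟩
      have huniv : SS = Finset.univ := by
        apply closed_eq_univ SS hne hca
        intro x hx
        have : c a + x ∈ SS := hsub (Finset.mem_image_of_mem _ hx)
        rwa [add_comm] at this
      have : (SS ∪ SS.image (fun x => c a + x)).card = p := by
        rw [Finset.union_eq_left.mpr hsub, huniv, Finset.card_univ, ZMod.card]
      rw [this]
      exact min_le_left _ _
    · obtain ⟨z, hz1, hz2⟩ := Finset.not_subset.mp hsub
      have hins : insert z SS ⊆ SS ∪ SS.image (fun x => c a + x) := by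
        intro w hw
        rcases Finset.mem_insert.mp hw with rfl | hw
        · exact Finset.mem_union_right _ hz1
        · exact Finset.mem_union_left _ hw
      have h3 : SS.card + 1 ≤ (SS ∪ SS.image (fun x => c a + x)).card := by
        rw [← Finset.card_insert_of_notMem hz2]
        exact Finset.card_le_card hins
      have h4 := Finset.card_insert_of_notMem ha
      omega

lemma exists_T (p : ℕ) (hp : p.Prime) (c : Fin p → ℤ) (hc : ∀ i, ¬ (p : ℤ) ∣ c i)
    (l : Fin p) : ∃ T : Finset (Fin p), l ∈ T ∧ (p : ℤ) ∣ ∑ i ∈ T, c i := by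
  haveI : Fact p.Prime := ⟨hp⟩
  classical
  set c' : Fin p → ZMod p := fun i => ((c i : ℤ) : ZMod p) with hc'
  have hc'' : ∀ i ∈ Finset.univ.erase l, c' i ≠ 0 := by
    intro i _
    simp only [hc', ne_eq, ZMod.intCast_zmod_eq_zero_iff_dvd]
    exact hc i
  have hcard := card_subsetSums c' (Finset.univ.erase l) hc''
  have hce : (Finset.univ.erase l).card = p - 1 := by
    rw [Finset.card_erase_of_mem (Finset.mem_univ l), Finset.card_univ, Fintype.card_fin]
  have hp1 : 1 ≤ p := hp.one_lt.le
  rw [hce] at hcard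
  have hmin : min p (p - 1 + 1) = p := by omega
  rw [hmin] at hcard
  have huniv : ((Finset.univ.erase l).powerset.image (fun T => ∑ i ∈ T, c' i))
      = Finset.univ := by
    apply Finset.eq_univ_of_card
    have hle := Finset.card_le_card (Finset.subset_univ
      ((Finset.univ.erase l).powerset.image (fun T => ∑ i ∈ T, c' i)))
    rw [Finset.card_univ, ZMod.card] at hle
    rw [ZMod.card]
    omega
  have hmem : -c' l ∈ ((Finset.univ.erase l).powerset.image (fun T => ∑ i ∈ T, c' i)) := by
    rw [huniv]; exact Finset.mem_univ _
  obtain ⟨T₀, hT₀, hsum⟩ := Finset.mem_image.mp hmem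
  have hlT₀ : l ∉ T₀ := fun h =>
    (Finset.ne_of_mem_erase (Finset.mem_powerset.mp hT₀ h)) rfl
  refine ⟨insert l T₀, Finset.mem_insert_self _ _, ?_⟩
  rw [← ZMod.intCast_zmod_eq_zero_iff_dvd]
  push_cast
  rw [Finset.sum_insert hlT₀]
  have : ∑ i ∈ T₀, ((c i : ℤ) : ZMod p) = -c' l := hsum
  rw [this]
  simp [c']

lemma dvd_of_sq_dvd_mul {p d : ℤ} (hp : p ≠ 0) (h : p ^ 2 ∣ p * d) : p ∣ d := by
  rcases h with ⟨e, he⟩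
  exact ⟨e, mul_left_cancel₀ hp (he.trans (by ring))⟩

lemma key_contra (p μ₁ μ₂ : ℕ) (hp : p.Prime) (hμ₁ : μ₁ < p) (hμ₂ : μ₂ < p) (hμ : μ₁ ≠ μ₂)
    (A B : ℤ) (hB : ¬ (p : ℤ) ∣ B) (hAB : (p : ℤ) ∣ A + B)
    (h : (p : ℤ) ∣ (μ₁ : ℤ) * A + (μ₂ : ℤ) * B) : False := by
  haveI : Fact p.Prime := ⟨hp⟩
  have hAB' : (A : ZMod p) + (B : ZMod p) = 0 := by
    have := (ZMod.intCast_zmod_eq_zero_iff_dvd _ p).mpr hAB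
    push_cast at this; exact this
  have h' : (μ₁ : ZMod p) * A + (μ₂ : ZMod p) * B = 0 := by
    have := (ZMod.intCast_zmod_eq_zero_iff_dvd _ p).mpr h
    push_cast at this; exact this
  have hB' : (B : ZMod p) ≠ 0 := fun h0 =>
    hB ((ZMod.intCast_zmod_eq_zero_iff_dvd _ p).mp h0)
  have hA : (A : ZMod p) = -(B : ZMod p) := by linear_combination hAB'
  rw [hA] at h'
  have : ((μ₂ : ZMod p) - (μ₁ : ZMod p)) * B = 0 := by linear_combination h'
  rcases mul_eq_zero.mp this with h0 | h0
  · have : (μ₁ : ZMod p) = (μ₂ : ZMod p) := by linear_combination -h0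
    have := (ZMod.natCast_eq_natCast_iff _ _ _).mp this
    have := Nat.ModEq.eq_of_lt_of_lt this hμ₁ hμ₂
    exact hμ this
  · exact hB' h0

theorem stmt_6 (p k ν μ₁ μ₂ : ℕ) (hp : p.Prime) (hk : 0 < k)
    (hdvd : (p - 1) ∣ k) (hν : ν ≤ p) (hμ₁ : μ₁ ≤ p - 1) (hμ₂ : μ₂ ≤ p - 1)
    (hμ : μ₁ ≠ μ₂) (c : Fin p → ℤ) (hc : ∀ i, ¬ (p : ℤ) ∣ c i)
    (v : Fin p → ℤ × ℤ)
    (hv : ∀ i : Fin p, v i = if (i : ℕ) < p - 1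
        then c i • (eLow ν + (μ₁ : ℤ) • eHigh p ν)
        else c i • (eLow ν + (μ₂ : ℤ) • eHigh p ν)) :
    ∃ y : Fin p → ℤ, ¬ (p : ℤ) ∣ y ⟨p - 1, by have := hp.two_le; omega⟩ ∧
      (p : ℤ) ∣ (∑ i, (y i ^ k) • v i).1 ∧
      (p : ℤ) ∣ (∑ i, (y i ^ k) • v i).2 ∧
      ¬ ((p : ℤ) ^ 2 ∣ (∑ i, (y i ^ k) • v i).1 ∧
         (p : ℤ) ^ 2 ∣ (∑ i, (y i ^ k) • v i).2) := by
  classical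
  have hp2 := hp.two_le
  set last : Fin p := ⟨p - 1, by omega⟩ with hlast
  obtain ⟨T, hlT, hTdvd⟩ := exists_T p hp c hc last
  set y : Fin p → ℤ := fun i => if i ∈ T then 1 else 0 with hy
  have hyk : ∀ i, y i ^ k = if i ∈ T then 1 else 0 := by
    intro i
    by_cases h : i ∈ T <;> simp [hy, h, zero_pow hk.ne']
  set A : ℤ := ∑ i ∈ T.erase last, c i with hA
  set B : ℤ := c last with hB
  have hABdvd : (p : ℤ) ∣ A + B := by
    have : ∑ i ∈ T, c i = B + A := by
      rw [← Finset.insert_erase hlT, Finset.sum_insert (Finset.notMem_erase _ _)]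
    rw [this] at hTdvd
    rwa [add_comm]
  set w₁ : ℤ × ℤ := eLow ν + (μ₁ : ℤ) • eHigh p ν with hw₁
  set w₂ : ℤ × ℤ := eLow ν + (μ₂ : ℤ) • eHigh p ν with hw₂
  have hsum : (∑ i, (y i ^ k) • v i) = A • w₁ + B • w₂ := by
    have h1 : (∑ i, (y i ^ k) • v i) = ∑ i ∈ T, v i := by
      simp only [hyk, ite_smul, one_smul, zero_smul]
      rw [Finset.sum_ite_mem, Finset.univ_inter]
    rw [h1, ← Finset.insert_erase hlT, Finset.sum_insert (Finset.notMem_erase _ _)]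
    have hvlast : v last = B • w₂ := by
      rw [hv last]
      simp [hlast, hw₂, hB]
    have hvrest : ∑ i ∈ T.erase last, v i = A • w₁ := by
      rw [hA, Finset.sum_smul]
      apply Finset.sum_congr rfl
      intro i hi
      rw [hv i, if_pos]
      have h1 : i ≠ last := Finset.ne_of_mem_erase hi
      have h2 : (i : ℕ) < p := i.isLt
      have h3 : (i : ℕ) ≠ p - 1 := fun h => h1 (Fin.ext h)
      omega
    rw [hvlast, hvrest, add_comm]
  have hBnd : ¬ (p : ℤ) ∣ B := hc last
  have hμ₁' : μ₁ < p := by omega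
  have hμ₂' : μ₂ < p := by omega
  have hp0 : (p : ℤ) ≠ 0 := by exact_mod_cast hp.ne_zero
  have key : (p : ℤ) ∣ (A • w₁ + B • w₂).1 ∧ (p : ℤ) ∣ (A • w₁ + B • w₂).2 ∧
      ¬ ((p : ℤ) ^ 2 ∣ (A • w₁ + B • w₂).1 ∧ (p : ℤ) ^ 2 ∣ (A • w₁ + B • w₂).2) := by
    rcases Nat.eq_zero_or_pos ν with hν0 | hν0
    · subst hν0
      have e1 : w₁ = ((1 : ℤ), (μ₁ : ℤ) * (p : ℤ)) := by
        simp [hw₁, eLow, eHigh, Prod.ext_iff, mul_comm]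
      have e2 : w₂ = ((1 : ℤ), (μ₂ : ℤ) * (p : ℤ)) := by
        simp [hw₂, eLow, eHigh, Prod.ext_iff, mul_comm]
      rw [e1, e2]
      have hfst : (A • ((1 : ℤ), (μ₁ : ℤ) * (p : ℤ)) + B • ((1 : ℤ), (μ₂ : ℤ) * (p : ℤ))).1
          = A + B := by simp
      have hsnd : (A • ((1 : ℤ), (μ₁ : ℤ) * (p : ℤ)) + B • ((1 : ℤ), (μ₂ : ℤ) * (p : ℤ))).2
          = (p : ℤ) * ((μ₁ : ℤ) * A + (μ₂ : ℤ) * B) := by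
        simp only [Prod.snd_add, Prod.smul_snd, smul_eq_mul]; ring
      rw [hfst, hsnd]
      refine ⟨hABdvd, Dvd.intro _ rfl, ?_⟩
      rintro ⟨h1, h2⟩
      exact key_contra p μ₁ μ₂ hp hμ₁' hμ₂' hμ A B hBnd hABdvd (dvd_of_sq_dvd_mul hp0 h2)
    · have hν0' : ν ≠ 0 := by omega
      have e1 : w₁ = ((ν : ℤ) + (μ₁ : ℤ) * (p : ℤ), (1 : ℤ)) := by
        simp [hw₁, eLow, eHigh, hν0', Prod.ext_iff, mul_comm]
      have e2 : w₂ = ((ν : ℤ) + (μ₂ : ℤ) * (p : ℤ), (1 : ℤ)) := by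
        simp [hw₂, eLow, eHigh, hν0', Prod.ext_iff, mul_comm]
      rw [e1, e2]
      have hfst : (A • ((ν : ℤ) + (μ₁ : ℤ) * (p : ℤ), (1 : ℤ))
            + B • ((ν : ℤ) + (μ₂ : ℤ) * (p : ℤ), (1 : ℤ))).1
          = (ν : ℤ) * (A + B) + (p : ℤ) * ((μ₁ : ℤ) * A + (μ₂ : ℤ) * B) := by
        simp only [Prod.fst_add, Prod.smul_fst, smul_eq_mul]; ring
      have hsnd : (A • ((ν : ℤ) + (μ₁ : ℤ) * (p : ℤ), (1 : ℤ))
            + B • ((ν : ℤ) + (μ₂ : ℤ) * (p : ℤ), (1 : ℤ))).2 = A + B := by simp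
      rw [hfst, hsnd]
      refine ⟨dvd_add (hABdvd.mul_left _) (Dvd.intro _ rfl), hABdvd, ?_⟩
      rintro ⟨h1, h2⟩
      have h3 : (p : ℤ) ^ 2 ∣ (p : ℤ) * ((μ₁ : ℤ) * A + (μ₂ : ℤ) * B) := by
        have h4 := dvd_sub h1 (h2.mul_left ((ν : ℤ)))
        convert h4 using 1
        · rfl
        · ring
      exact key_contra p μ₁ μ₂ hp hμ₁' hμ₂' hμ A B hBnd hABdvd (dvd_of_sq_dvd_mul hp0 h3)
  refine ⟨y, ?_, by rw [hsum]; exact key.1, by rw [hsum]; exact key.2.1,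
    by rw [hsum]; exact key.2.2⟩
  have hy1 : y ⟨p - 1, by omega⟩ = 1 := by
    simp only [hy, ← hlast, if_pos hlT]
  rw [hy1]
  intro h
  have := Int.le_of_dvd one_pos h
  omega
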